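/- Fix β > 2 and let g(w) = 1/(1 + exp(2βw − β)). If w ∈ [0, 1/2) satisfies w = g(1−w), and w* ∈ [0,1/2) is the unique point where d/dw g(1−w) = 1, then w < w*; consequently −1 + 2h(w,β) < 0 where h(w,β) = β/(2 + 2cosh(β − 2wβ)). -/

import Mathlib

lemma deriv_g (β v : ℝ) :
    deriv (fun v : ℝ => 1 / (1 + Real.exp (2 * β * (1 - v) - β))) v
      = 2 * β / (2 + 2 * Real.cosh (2 * β * (1 - v) - β)) := by
  set t : ℝ := 2 * β * (1 - v) - β with ht
  have hpos : (0:ℝ) < 1 + Real.exp t := by positivity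
  have h1 : HasDerivAt (fun v : ℝ => 2 * β * (1 - v) - β) (2 * β * (-1)) v := by
    have := (((hasDerivAt_id v).const_sub 1).const_mul (2 * β)).sub_const β
    simpa using this
  have h4 := ((h1.exp).const_add 1).inv (ne_of_gt hpos)
  have heq : (fun v : ℝ => 1 / (1 + Real.exp (2 * β * (1 - v) - β)))
      = fun v : ℝ => (1 + Real.exp (2 * β * (1 - v) - β))⁻¹ := by
    funext x; rw [one_div]
  rw [heq, (show HasDerivAt (fun v : ℝ => (1 + Real.exp (2 * β * (1 - v) - β))⁻¹) _ v from h4).deriv, Real.cosh_eq, Real.exp_neg, ← ht]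
  have hE := Real.exp_ne_zero t
  have hd : (2 : ℝ) + 2 * ((Real.exp t + (Real.exp t)⁻¹) / 2) ≠ 0 := by
    have : (0:ℝ) < 2 + 2 * ((Real.exp t + (Real.exp t)⁻¹) / 2) := by positivity
    linarith
  field_simp
  ring

theorem w_lt_wstar_and_eigenvalue_neg (β : ℝ) (hβ : 2 < β)
    (w : ℝ) (hw : w ∈ Set.Ico (0:ℝ) (1/2))
    (hfix : w = 1 / (1 + Real.exp (2 * β * (1 - w) - β)))
    (wstar : ℝ) (hwstar : wstar ∈ Set.Ico (0:ℝ) (1/2))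
    (hderiv : deriv (fun v : ℝ => 1 / (1 + Real.exp (2 * β * (1 - v) - β))) wstar = 1) :
    w < wstar ∧ -1 + 2 * (β / (2 + 2 * Real.cosh (β - 2 * w * β))) < 0 := by
  obtain ⟨hw0, hw2⟩ := hw
  have hEpos : (0:ℝ) < Real.exp (2 * β * (1 - w) - β) := Real.exp_pos _
  have hwpos : 0 < w := by
    rw [hfix]; positivity
  have hw1 : w < 1 := by linarith
  -- fixed point: exp t = (1-w)/w
  have hE : Real.exp (2 * β * (1 - w) - β) = (1 - w) / w := by
    have h1 : w * (1 + Real.exp (2 * β * (1 - w) - β)) = 1 := by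
      field_simp at hfix
      rw [show 2 * β * (1 - w) - β = β * (2 * (1 - w) - 1) by ring]; linarith [hfix]
    rw [eq_div_iff hwpos.ne']
    linarith [h1]
  have hx1 : (1:ℝ) < (1 - w) / w := by
    rw [lt_div_iff₀ hwpos]; linarith
  have hlog : 2 * β * (1 - w) - β = Real.log ((1 - w) / w) := by
    rw [← hE, Real.log_exp]
  -- key inequality: 2 β w (1-w) < 1
  have hkey : 2 * β * w * (1 - w) < 1 := by
    have hs : Real.log ((1 - w) / w) < Real.sinh (Real.log ((1 - w) / w)) :=
      Real.self_lt_sinh_iff.2 (Real.log_pos hx1)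
    rw [Real.sinh_log (div_pos (by linarith) hwpos)] at hs
    rw [← hlog] at hs
    have hinv : ((1 - w) / w)⁻¹ = w / (1 - w) := by
      rw [inv_div]
    rw [hinv] at hs
    have h2 : 2 * β * (1 - w) - β = β * (1 - 2 * w) := by ring
    have h3 : (1 - w) / w - w / (1 - w) = (1 - 2 * w) / (w * (1 - w)) := by
      field_simp [hwpos.ne', (show (1:ℝ) - w ≠ 0 by linarith)]; ring
    rw [h2, h3] at hs
    have hww : 0 < w * (1 - w) := mul_pos hwpos (by linarith)
    have h12 : 0 < 1 - 2 * w := by linarith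
    rw [div_div, lt_div_iff₀ (by nlinarith : (0:ℝ) < w * (1 - w) * 2)] at hs
    nlinarith [hs]
  -- cosh identity: 2 + 2 cosh(β - 2wβ) = 1/(w(1-w))
  have htw : β - 2 * w * β = 2 * β * (1 - w) - β := by ring
  have hcosh : 2 + 2 * Real.cosh (β - 2 * w * β) = 1 / (w * (1 - w)) := by
    rw [htw, Real.cosh_eq, Real.exp_neg, hE]
    rw [inv_div]
    field_simp [hwpos.ne', (show (1:ℝ) - w ≠ 0 by linarith)]
    ring
  have hsecond : -1 + 2 * (β / (2 + 2 * Real.cosh (β - 2 * w * β))) < 0 := by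
    rw [hcosh]
    have : β / (1 / (w * (1 - w))) = β * (w * (1 - w)) := by
      field_simp
    rw [this]
    nlinarith [hkey]
  refine ⟨?_, hsecond⟩
  -- first part
  by_contra hle
  push_neg at hle  -- wstar ≤ w
  rw [deriv_g] at hderiv
  have hts : 2 * β * (1 - wstar) - β = β * (1 - 2 * wstar) := by ring
  have hws0 := hwstar.1
  have hws2 := hwstar.2
  have hmono : Real.cosh (β - 2 * w * β) ≤ Real.cosh (2 * β * (1 - wstar) - β) := by
    apply Real.cosh_le_cosh.2
    rw [abs_of_nonneg (by nlinarith), abs_of_nonneg (by nlinarith)]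
    nlinarith
  have hdpos : (0:ℝ) < 2 + 2 * Real.cosh (2 * β * (1 - wstar) - β) := by
    have := Real.cosh_pos (x := 2 * β * (1 - wstar) - β)
    linarith
  have h2b : 2 * β = 2 + 2 * Real.cosh (2 * β * (1 - wstar) - β) := by
    field_simp at hderiv
    rw [show β * (2 * (1 - wstar) - 1) = 2 * β * (1 - wstar) - β by ring] at hderiv
    linarith [hderiv]
  have hlt : 1 / (w * (1 - w)) ≤ 2 + 2 * Real.cosh (2 * β * (1 - wstar) - β) := by
    rw [← hcosh]; linarith
  rw [← h2b] at hlt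
  rw [div_le_iff₀ (mul_pos hwpos (by linarith : (0:ℝ) < 1 - w))] at hlt
  nlinarith [hkey, hlt]
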